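/- arXiv:2307.16552 — 5 statements merged into one kernel-verified Lean document; each statement's English description precedes it below -/
import Mathlib

section
/- Let G be an endofunctor on Set that preserves weak pullbacks (i.e., for all f : X → Z, g : Y → Z, with W = {(x,y) | f x = g y} and projections p, q, every (a, b) ∈ G X × G Y with (G f) a = (G g) b admits c ∈ G W with (G p) c = a and (G q) c = b). Let F be a subfunctor of G, i.e., an endofunctor F with a natural transformation η : F ⟹ G all of whose components are injective. Then F admits a diagonal-preserving lax F-lifting. -/
universe u v

open CategoryTheory

/-- The graph of a function, as a relation. -/
def gr {X Y : Type u} (f : X → Y) : Rel X Y := fun x y => f x = y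

/-- A lax lifting of an endofunctor `F` on `Set` to relations: monotone, laxly
functorial, and laxly extending graphs and converse graphs. -/
structure LaxLifting (F : Type u ⥤ Type u) : Type (u + 1) where
  map : ∀ {X Y : Type u}, Rel X Y → Rel (F.obj X) (F.obj Y)
  mono : ∀ {X Y : Type u} {R S : Rel X Y}, R ≤ S → map R ≤ map S
  laxComp : ∀ {X Y Z : Type u} (R : Rel X Y) (S : Rel Y Z),
    Relation.Comp (map R) (map S) ≤ map (Relation.Comp R S)
  graph_le : ∀ {X Y : Type u} (f : X → Y), gr (F.map (TypeCat.ofHom f)) ≤ map (gr f)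
  graphInv_le : ∀ {X Y : Type u} (f : X → Y), flip (gr (F.map (TypeCat.ofHom f))) ≤ map (flip (gr f))

/-- Pointwise order on lax liftings. -/
def LiftLE {F : Type u ⥤ Type u} (L L' : LaxLifting F) : Prop :=
  ∀ (X Y : Type u) (R : Rel X Y), L.map R ≤ L'.map R
/-- `G` preserves weak pullbacks. -/
def PreservesWeakPullbacks (G : Type u ⥤ Type u) : Prop :=
  ∀ (X Y Z : Type u) (f : X → Z) (g : Y → Z) (a : G.obj X) (b : G.obj Y),
    G.map (TypeCat.ofHom f) a = G.map (TypeCat.ofHom g) b →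
      ∃ c : G.obj {p : X × Y // f p.1 = g p.2},
        G.map (TypeCat.ofHom (fun p : {p : X × Y // f p.1 = g p.2} => p.1.1)) c = a ∧
        G.map (TypeCat.ofHom (fun p : {p : X × Y // f p.1 = g p.2} => p.1.2)) c = b

/-- The Barr lifting of a relation along a functor. -/
def Barr (G : Type u ⥤ Type u) {X Y : Type u} (R : Rel X Y) :
    Rel (G.obj X) (G.obj Y) := fun u v =>
  ∃ c : G.obj {p : X × Y // R p.1 p.2},
    G.map (TypeCat.ofHom (fun p : {p : X × Y // R p.1 p.2} => p.1.1)) c = u ∧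
      G.map (TypeCat.ofHom (fun p : {p : X × Y // R p.1 p.2} => p.1.2)) c = v

/-- Every subfunctor of a weak pullback-preserving functor admits a
diagonal-preserving lax lifting. -/
theorem subfunctor_admits_diagonal_preserving_lifting (F G : Type u ⥤ Type u)
    (hG : PreservesWeakPullbacks G) (η : F ⟶ G)
    (hinj : ∀ X : Type u, Function.Injective (η.app X)) :
    ∃ L : LaxLifting F, ∀ (X : Type u) (a b : F.obj X),
      L.map (fun x y : X => x = y) a b → a = b := by
  refine ⟨{ map := fun {X Y} R a b => Barr G R (η.app X a) (η.app Y b)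
            mono := ?_, laxComp := ?_, graph_le := ?_, graphInv_le := ?_ }, ?_⟩
  · intro X Y R S hRS a b ⟨c, hc1, hc2⟩
    refine ⟨G.map (TypeCat.ofHom (fun p : {p : X × Y // R p.1 p.2} =>
      (⟨p.1, hRS _ _ p.2⟩ : {p : X × Y // S p.1 p.2}))) c, ?_, ?_⟩
    · rw [← FunctorToTypes.map_comp_apply]; exact hc1
    · rw [← FunctorToTypes.map_comp_apply]; exact hc2
  · intro X Y Z R S a c ⟨b, ⟨c1, h11, h12⟩, ⟨c2, h21, h22⟩⟩
    -- weak pullback of snd : R~ → Y and fst : S~ → Y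
    obtain ⟨d, hd1, hd2⟩ := hG _ _ Y
      (fun p : {p : X × Y // R p.1 p.2} => p.1.2)
      (fun p : {p : Y × Z // S p.1 p.2} => p.1.1)
      c1 c2 (by rw [h12, h21])
    refine ⟨G.map (TypeCat.ofHom (fun w : {p : {p : X × Y // R p.1 p.2} × {p : Y × Z // S p.1 p.2} //
        p.1.1.2 = p.2.1.1} =>
        (⟨(w.1.1.1.1, w.1.2.1.2), ⟨w.1.1.1.2, w.1.1.2, w.2 ▸ w.1.2.2⟩⟩ :
          {p : X × Z // (Relation.Comp R S) p.1 p.2}))) d, ?_, ?_⟩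
    · rw [← FunctorToTypes.map_comp_apply]
      have : (G.map (TypeCat.ofHom (fun w : {p : {p : X × Y // R p.1 p.2} × {p : Y × Z // S p.1 p.2} //
          p.1.1.2 = p.2.1.1} => w.1.1.1.1))) d = η.app X a := by
        have := congrArg (G.map (TypeCat.ofHom (fun p : {p : X × Y // R p.1 p.2} => p.1.1))) hd1
        rw [← FunctorToTypes.map_comp_apply] at this
        rw [← h11]; exact this
      exact this
    · rw [← FunctorToTypes.map_comp_apply]
      have := congrArg (G.map (TypeCat.ofHom (fun p : {p : Y × Z // S p.1 p.2} => p.1.2))) hd2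
      rw [← FunctorToTypes.map_comp_apply] at this
      rw [← h22]; exact this
  · intro X Y f a b hab
    refine ⟨G.map (TypeCat.ofHom (fun x : X => (⟨(x, f x), rfl⟩ : {p : X × Y // gr f p.1 p.2})))
      (η.app X a), ?_, ?_⟩
    · rw [← FunctorToTypes.map_comp_apply]
      simp only [CategoryTheory.types_comp]
      exact FunctorToTypes.map_id_apply G (η.app X a)
    · rw [← FunctorToTypes.map_comp_apply]
      have : b = F.map (TypeCat.ofHom f) a := hab.symm
      subst this
      exact (FunctorToTypes.naturality (F := F) (G := G) η (TypeCat.ofHom f) a).symm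
  · intro X Y f b a hab
    refine ⟨G.map (TypeCat.ofHom (fun x : X => (⟨(f x, x), rfl⟩ : {p : Y × X // flip (gr f) p.1 p.2})))
      (η.app X a), ?_, ?_⟩
    · rw [← FunctorToTypes.map_comp_apply]
      have : b = F.map (TypeCat.ofHom f) a := hab.symm
      subst this
      exact (FunctorToTypes.naturality (F := F) (G := G) η (TypeCat.ofHom f) a).symm
    · rw [← FunctorToTypes.map_comp_apply]
      exact FunctorToTypes.map_id_apply G (η.app X a)
  · intro X a b ⟨c, hc1, hc2⟩
    apply hinj X
    rw [← hc1, ← hc2]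
    have : (fun p : {p : X × X // p.1 = p.2} => p.1.1) =
        (fun p : {p : X × X // p.1 = p.2} => p.1.2) := by
      funext p; exact p.2
    rw [this]
end

section
/- Let F be an endofunctor on Set. The operations L ↦ λ^L and λ ↦ L^λ are mutually inverse: for every lax F-lifting L, L^{(λ^L)} = L, and for every lax distributive law λ for F, λ^{(L^λ)} = λ. -/
universe u v

open CategoryTheory

/-- A lax distributive law of \`F\` over the powerset monad: a family of maps
\`λ_X : F (P X) → P (F X)\` that is monotone, laxly natural, and laxly compatible
with the unit and multiplication of the powerset monad. -/
structure LaxDistLaw (F : Type u ⥤ Type u) : Type (u + 1) where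
  app : ∀ Z : Type u, F.obj (Set Z) → Set (F.obj Z)
  mono : ∀ (X Y : Type u) (f g : X → Set Y), (∀ x, f x ⊆ g x) →
    ∀ a : F.obj X, app Y (F.map (TypeCat.ofHom f) a) ⊆ app Y (F.map (TypeCat.ofHom g) a)
  laxNat : ∀ (X Y : Type u) (f : X → Set Y) (a : F.obj (Set X)),
    F.map (TypeCat.ofHom f) '' app X a ⊆ app (Set Y) (F.map (TypeCat.ofHom (Set.image f)) a)
  laxMul : ∀ (Z : Type u) (a : F.obj (Set (Set Z))),
    ⋃₀ (app Z '' app (Set Z) a) ⊆ app Z (F.map (TypeCat.ofHom Set.sUnion) a)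
  laxUnit : ∀ (Z : Type u) (a : F.obj Z),
    a ∈ app Z (F.map (TypeCat.ofHom (fun z => ({z} : Set Z))) a)

/-- The Kleisli map \`χ_R : X → P Y\` associated to a relation \`R : X ⇸ Y\`. -/
def chi {X Y : Type u} (R : Rel X Y) : X → Set Y := fun x => {y | R x y}

/-- The membership relation \`∋_Z : P Z ⇸ Z\`. -/
def memRel (Z : Type u) : Rel (Set Z) Z := fun A z => z ∈ A

/-- The lifting assignment \`L^λ\` induced by a distributive-law-shaped family:
\`L^λ R := ⌊λ_Y ∘ F χ_R⌋\`. -/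
def toLiftMap (F : Type u ⥤ Type u) (lam : ∀ Z : Type u, F.obj (Set Z) → Set (F.obj Z)) :
    ∀ X Y : Type u, Rel X Y → Rel (F.obj X) (F.obj Y) :=
  fun X Y R a b => b ∈ lam Y (F.map (TypeCat.ofHom (chi R)) a)

/-- The distributive-law-shaped family \`λ^L\` induced by a lifting assignment:
\`λ^L_Z := χ_{L(∋_Z)}\`. -/
def toLawMap (F : Type u ⥤ Type u)
    (Lm : ∀ X Y : Type u, Rel X Y → Rel (F.obj X) (F.obj Y)) :
    ∀ Z : Type u, F.obj (Set Z) → Set (F.obj Z) :=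
  fun Z a => {b | Lm (Set Z) Z (memRel Z) a b}

/-- The operations `L ↦ λ^L` and `λ ↦ L^λ` are mutually inverse. -/
theorem lift_law_inverse (F : Type u ⥤ Type u) :
    (∀ L : LaxLifting F, ∀ (X Y : Type u) (R : Rel X Y),
      toLiftMap F (toLawMap F (fun X Y => L.map (X := X) (Y := Y))) X Y R = L.map R) ∧
    (∀ lam : LaxDistLaw F, ∀ Z : Type u,
      toLawMap F (toLiftMap F lam.app) Z = lam.app Z) := by
  constructor
  · intro L X Y R
    funext a b
    apply propext
    show L.map (memRel Y) (F.map (TypeCat.ofHom (chi R)) a) b ↔ L.map R a b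
    have hcomp : Relation.Comp (gr (chi R)) (memRel Y) = R := by
      funext x y
      apply propext
      constructor
      · rintro ⟨A, rfl, hy⟩; exact hy
      · intro h; exact ⟨_, rfl, h⟩
    constructor
    · intro h
      have h1 : L.map (gr (chi R)) a (F.map (TypeCat.ofHom (chi R)) a) := L.graph_le _ a _ rfl
      have h2 := L.laxComp (gr (chi R)) (memRel Y) a b ⟨_, h1, h⟩
      rwa [hcomp] at h2
    · intro h
      have h1 : L.map (flip (gr (chi R))) (F.map (TypeCat.ofHom (chi R)) a) a := L.graphInv_le _ _ a rfl
      have h2 := L.laxComp (flip (gr (chi R))) R _ b ⟨a, h1, h⟩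
      refine L.mono ?_ _ _ h2
      rintro A y ⟨x, hx, hR⟩
      exact hx ▸ hR
  · intro lam Z
    funext a
    show {b | b ∈ lam.app Z (F.map (TypeCat.ofHom (chi (memRel Z))) a)} = lam.app Z a
    have h1 : chi (memRel Z) = id := rfl
    rw [h1]
    have h2 : F.map (TypeCat.ofHom (id : Set Z → Set Z)) a = a := by
      rw [show TypeCat.ofHom (id : Set Z → Set Z) = 𝟙 _ from rfl, F.map_id]; rfl
    rw [h2]
    rfl
end

section
/- Let F be an endofunctor on Set and L a lax F-lifting. Then λ^L, defined by λ^L_Z := χ_{L(∋_Z)}, is a lax distributive law for F: it satisfies monotonicity, lax naturality, and the lax Eilenberg–Moore conditions. -/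
universe u v

open CategoryTheory

/-- For any lax `F`-lifting `L`, the family `λ^L := χ_{L(∋)}` is a lax
distributive law for `F`: it satisfies monotonicity, lax naturality, and the
lax Eilenberg–Moore conditions. -/
theorem toLawMap_is_lax_dist_law (F : Type u ⥤ Type u) (L : LaxLifting F) :
    ∃ lam : LaxDistLaw F,
      lam.app = toLawMap F (fun X Y => L.map (X := X) (Y := Y)) := by
  refine ⟨⟨toLawMap F (fun X Y => L.map (X := X) (Y := Y)), ?_, ?_, ?_, ?_⟩, rfl⟩
  · -- mono
    intro X Y f g hfg a b hb
    have hb' : L.map (memRel Y) (F.map (TypeCat.ofHom f) a) b := hb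
    have h2 : L.map (flip (gr g)) (F.map (TypeCat.ofHom g) a) a := L.graphInv_le g _ _ rfl
    have h3 : L.map (gr f) a (F.map (TypeCat.ofHom f) a) := L.graph_le f _ _ rfl
    have h4 : L.map (Relation.Comp (Relation.Comp (flip (gr g)) (gr f)) (memRel Y)) (F.map (TypeCat.ofHom g) a) b :=
      L.laxComp _ _ _ _ ⟨F.map (TypeCat.ofHom f) a, L.laxComp _ _ _ _ ⟨a, h2, h3⟩, hb'⟩
    refine L.mono ?_ _ _ h4
    rintro A y ⟨B, ⟨x, hgx, hfx⟩, hy⟩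
    have : y ∈ f x := hfx ▸ hy
    exact hgx ▸ hfg x this
  · -- laxNat
    intro X Y f a
    rintro _ ⟨b, hb, rfl⟩
    have hb' : L.map (memRel X) a b := hb
    have h2 : L.map (flip (gr (Set.image f))) (F.map (TypeCat.ofHom (Set.image f)) a) a :=
      L.graphInv_le _ _ _ rfl
    have h3 : L.map (gr f) b (F.map (TypeCat.ofHom f) b) := L.graph_le f _ _ rfl
    have h4 : L.map (Relation.Comp (Relation.Comp (flip (gr (Set.image f))) (memRel X)) (gr f))
        (F.map (TypeCat.ofHom (Set.image f)) a) (F.map (TypeCat.ofHom f) b) :=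
      L.laxComp _ _ _ _ ⟨b, L.laxComp _ _ _ _ ⟨a, h2, hb'⟩, h3⟩
    refine L.mono ?_ _ _ h4
    rintro 𝒜 B ⟨A, ⟨𝒜', h𝒜, hA⟩, hB⟩
    exact h𝒜 ▸ hB ▸ Set.mem_image_of_mem f hA
  · -- laxMul
    intro Z a
    rintro c ⟨S, ⟨b, hb, rfl⟩, hc⟩
    have hb' : L.map (memRel (Set Z)) a b := hb
    have hc' : L.map (memRel Z) b c := hc
    have h2 : L.map (flip (gr (Set.sUnion (α := Z)))) (F.map (TypeCat.ofHom Set.sUnion) a) a :=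
      L.graphInv_le _ _ _ rfl
    have h4 : L.map (Relation.Comp (Relation.Comp (flip (gr (Set.sUnion (α := Z))))
        (memRel (Set Z))) (memRel Z)) (F.map (TypeCat.ofHom Set.sUnion) a) c :=
      L.laxComp _ _ _ _ ⟨b, L.laxComp _ _ _ _ ⟨a, h2, hb'⟩, hc'⟩
    refine L.mono ?_ _ _ h4
    rintro A z ⟨B, ⟨𝒜, h𝒜, hB⟩, hz⟩
    exact h𝒜 ▸ ⟨B, hB, hz⟩
  · -- laxUnit
    intro Z a
    have h2 : L.map (flip (gr (fun z => ({z} : Set Z))))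
        (F.map (TypeCat.ofHom (fun z => ({z} : Set Z))) a) a := L.graphInv_le _ _ _ rfl
    refine L.mono ?_ _ _ h2
    rintro A z hz
    exact hz ▸ rfl
end

section
/- Let F be an endofunctor on Set and λ a lax distributive law for F. Then L^λ, defined on a relation R : X ⇸ Y by L^λ R := ⌊λ_Y ∘ F χ_R⌋, is a lax F-lifting: it is monotone, laxly functorial, and satisfies gr(F f) ⊆ L^λ (gr f) and (gr(F f))° ⊆ L^λ ((gr f)°) for every function f. -/
universe u v

open CategoryTheory

/-- For any lax distributive law `λ` for `F`, the assignment
`L^λ R := ⌊λ_Y ∘ F χ_R⌋` is a lax `F`-lifting. -/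
theorem toLiftMap_is_lax_lifting (F : Type u ⥤ Type u) (lam : LaxDistLaw F) :
    ∃ L : LaxLifting F, ∀ (X Y : Type u) (R : Rel X Y),
      L.map R = toLiftMap F lam.app X Y R := by
  refine ⟨⟨fun {X Y} R => toLiftMap F lam.app X Y R, ?_, ?_, ?_, ?_⟩,
    fun X Y R => rfl⟩
  · intro X Y R S hRS a b hb
    exact lam.mono X Y (chi R) (chi S) (fun x y hy => hRS x y hy) a hb
  · intro X Y Z R S a c hc
    obtain ⟨b, hab, hbc⟩ := hc
    -- hab : b ∈ lam.app Y (F.map (chi R) a)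
    -- hbc : c ∈ lam.app Z (F.map (chi S) b)
    have h1 : F.map (TypeCat.ofHom (chi S)) b ∈
        lam.app (Set Z) (F.map (TypeCat.ofHom (Set.image (chi S))) (F.map (TypeCat.ofHom (chi R)) a)) :=
      lam.laxNat Y Z (chi S) (F.map (TypeCat.ofHom (chi R)) a) ⟨b, hab, rfl⟩
    have h2 : c ∈ ⋃₀ (lam.app Z ''
        lam.app (Set Z) (F.map (TypeCat.ofHom (Set.image (chi S))) (F.map (TypeCat.ofHom (chi R)) a))) :=
      ⟨lam.app Z (F.map (TypeCat.ofHom (chi S)) b), ⟨F.map (TypeCat.ofHom (chi S)) b, h1, rfl⟩, hbc⟩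
    have h3 := lam.laxMul Z (F.map (TypeCat.ofHom (Set.image (chi S))) (F.map (TypeCat.ofHom (chi R)) a)) h2
    rw [← FunctorToTypes.map_comp_apply, ← FunctorToTypes.map_comp_apply] at h3
    have heq : (TypeCat.ofHom (chi R) ≫ TypeCat.ofHom (Set.image (chi S)) ≫ TypeCat.ofHom Set.sUnion : X ⟶ Set Z) = TypeCat.ofHom (chi (Relation.Comp R S)) := by
      ext x z
      change z ∈ ⋃₀ (Set.image (chi S) (chi R x)) ↔ z ∈ chi (Relation.Comp R S) x
      simp only [types_comp_apply, Set.mem_sUnion, Set.mem_image, chi, Relation.Comp]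
      constructor
      · rintro ⟨_, ⟨y, hy, rfl⟩, hz⟩
        exact ⟨y, hy, hz⟩
      · rintro ⟨y, hy, hz⟩
        exact ⟨chi S y, ⟨y, hy, rfl⟩, hz⟩
    rw [heq] at h3
    exact h3
  · intro X Y f a b hab
    have h := lam.laxUnit Y (F.map (TypeCat.ofHom f) a)
    rw [← FunctorToTypes.map_comp_apply] at h
    have heq : (TypeCat.ofHom f ≫ TypeCat.ofHom (fun z => ({z} : Set Y)) : X ⟶ Set Y) = TypeCat.ofHom (chi (gr f)) := by
      ext x y
      simp [chi, gr, types_comp_apply, eq_comm]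
    rw [heq] at h
    rw [show b = F.map (TypeCat.ofHom f) a from hab.symm]
    exact h
  · intro X Y f a b hab
    -- hab : F.map f b = a
    have h := lam.laxUnit X b
    have h2 := lam.mono X X (fun z => ({z} : Set X)) (fun z => chi (flip (gr f)) (f z))
      (fun x y hy => by
        simp only [Set.mem_singleton_iff] at hy
        subst hy
        exact rfl) b h
    have heq : TypeCat.ofHom (fun z => chi (flip (gr f)) (f z)) = (TypeCat.ofHom f ≫ TypeCat.ofHom (chi (flip (gr f))) : X ⟶ Set X) := rfl
    rw [heq, FunctorToTypes.map_comp_apply, show F.map (TypeCat.ofHom f) b = a from hab] at h2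
    exact h2
end

section
/- Let F be an endofunctor on Set and λ a lax distributive law for F, and let L^λ be defined by L^λ R := ⌊λ_Y ∘ F χ_R⌋. If λ is laxly extensional (λ_Z ∘ F η_Z ≤ η_{F Z}), then L^λ is diagonal-preserving. If λ is symmetric ((λ_Y ∘ F f)^♭ = λ_X ∘ F (f^♭) for all f : X → P Y), then L^λ is symmetric. -/
universe u v

open CategoryTheory

/-- The converse of a Kleisli map: `f^♭(y) = {x | y ∈ f x}`. -/
def flat {A B : Type u} (f : A → Set B) : B → Set A := fun b => {a | b ∈ f a}

/-- If `λ` is laxly extensional then `L^λ` is diagonal-preserving; if `λ` is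
symmetric then `L^λ` is symmetric. -/
theorem toLiftMap_diagonal_and_symmetric (F : Type u ⥤ Type u) (lam : LaxDistLaw F) :
    ((∀ (Z : Type u) (a : F.obj Z),
        lam.app Z (F.map (TypeCat.ofHom (fun z => ({z} : Set Z))) a) ⊆ {a}) →
      ∀ (X : Type u) (a b : F.obj X),
        toLiftMap F lam.app X X (fun x y : X => x = y) a b → a = b) ∧
    ((∀ (X Y : Type u) (f : X → Set Y),
        flat (fun a : F.obj X => lam.app Y (F.map (TypeCat.ofHom f) a)) =
          fun b : F.obj Y => lam.app X (F.map (TypeCat.ofHom (flat f)) b)) →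
      ∀ (X Y : Type u) (R : Rel X Y),
        toLiftMap F lam.app Y X (flip R) = flip (toLiftMap F lam.app X Y R)) := by
  constructor
  · intro hext X a b hab
    have hchi : chi (fun x y : X => x = y) = fun z => ({z} : Set X) := by
      funext x; ext y; simp [chi, eq_comm, Set.mem_singleton_iff]
    rw [toLiftMap, hchi] at hab
    have := hext X a hab
    exact this.symm
  · intro hsym X Y R
    funext b a
    have hchi : chi (flip R) = flat (chi R) := rfl
    have h := congrFun (hsym X Y (chi R)) b
    show (a ∈ lam.app X (F.map (TypeCat.ofHom (chi (flip R))) b)) = _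
    rw [hchi, ← h]
    rfl
end
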